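/- arXiv:2412.16185 — 5 statements merged into one kernel-verified Lean document; each statement's English description precedes it below -/
import Mathlib

section
/- For every even integer E ≥ 2, the truncated Wallis product π_E = (2·E(E-2)²(E-4)²···4²·2²)/((E-1)²(E-3)²···3²·1²) satisfies π < π_E. -/
/-- The truncated Wallis product `π_E = (2·E(E-2)²···4²·2²)/((E-1)²(E-3)²···3²·1²)`,
as a function of an even `E`. -/
noncomputable def wallisTrunc (E : ℕ) : ℝ :=
  2 * (∏ k ∈ Finset.Icc 1 (E / 2 - 1), (2 * (k : ℝ)) ^ 2 / ((2 * k - 1) * (2 * k + 1)))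
    * ((E : ℝ) / (E - 1))

lemma prod_icc_eq_W (k : ℕ) :
    (∏ j ∈ Finset.Icc 1 k, (2 * (j : ℝ)) ^ 2 / ((2 * j - 1) * (2 * j + 1)))
      = Real.Wallis.W k := by
  induction k with
  | zero => simp [Real.Wallis.W]
  | succ k ih =>
    rw [Finset.prod_Icc_succ_top (by omega : 1 ≤ k + 1), ih, Real.Wallis.W_succ]
    congr 1
    push_cast
    rw [div_mul_div_comm]
    have h1 : (2 * (k : ℝ) + 1) ≠ 0 := by positivity
    have h3 : (2 * (k : ℝ) + 3) ≠ 0 := by positivity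
    have hk0 : (0:ℝ) ≤ (k:ℝ) := Nat.cast_nonneg k
    rw [div_eq_div_iff (by nlinarith) (by nlinarith)]
    ring

theorem wallis_trunc_gt_pi (E : ℕ) (hE : Even E) (hE2 : 2 ≤ E) :
    Real.pi < wallisTrunc E := by
  obtain ⟨n, rfl⟩ := hE
  have hn : 1 ≤ n := by omega
  obtain ⟨k, rfl⟩ : ∃ k, n = k + 1 := ⟨n - 1, by omega⟩
  have hdiv : (k + 1 + (k + 1)) / 2 - 1 = k := by omega
  have hcast : ((k + 1 + (k + 1) : ℕ) : ℝ) = 2 * (k : ℝ) + 2 := by push_cast; ring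
  rw [wallisTrunc, hdiv, prod_icc_eq_W, hcast]
  set x := (k : ℝ) with hx
  have hx0 : 0 ≤ x := Nat.cast_nonneg k
  set w := Real.Wallis.W k with hw
  have hwpos : 0 < w := Real.Wallis.W_pos k
  -- key inequality from le_W at k+1
  have h1 := Real.Wallis.le_W (k + 1)
  rw [Real.Wallis.W_succ] at h1
  push_cast at h1
  -- h1 : (2*(x+1)+1)/(2*(x+1)+2) * (π/2) ≤ w * ((2*x+2)/(2*x+1) * ((2*x+2)/(2*x+3)))
  have hne1 : (2*x+1) ≠ 0 := by positivity
  have hne3 : (2*x+3) ≠ 0 := by positivity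
  have hne4 : (2*(2*x+4)) ≠ 0 := by positivity
  have hne2 : (2*(x+1)+2) ≠ 0 := by positivity
  have e1 : (2*(x+1)+1)/(2*(x+1)+2) * (Real.pi/2)
      = (Real.pi * (2*x+3)) / (2*(2*x+4)) := by
    field_simp
    ring
  have e2 : w * ((2*x+2)/(2*x+1) * ((2*x+2)/(2*x+3)))
      = (w * (2*x+2) * (2*x+2)) / ((2*x+1)*(2*x+3)) := by
    field_simp
  rw [e1, e2] at h1
  have h2 := (div_le_div_iff₀ (by positivity) (by positivity)).mp h1
  -- h2 : π*(2x+3)*((2x+1)*(2x+3)) ≤ w*(2x+2)*(2x+2)*(2*(2x+4))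
  have hgoal : Real.pi * (2*x+1) < 2 * w * (2*x+2) := by
    have h3 : (2*x+2)*(2*x+4) < (2*x+3)^2 := by nlinarith
    have h4 : 0 < 2 * w * (2*x+2) := by positivity
    nlinarith [mul_lt_mul_of_pos_left h3 h4, sq_nonneg (2*x+3), mul_pos hwpos hwpos]
  have hpos : (0:ℝ) < 2*x+1 := by positivity
  calc Real.pi < 2 * w * (2*x+2) / (2*x+1) := by
        rw [lt_div_iff₀ hpos]; linarith [hgoal]
    _ = 2 * w * ((2*x+2) / (2*x+2-1)) := by ring
end

section
/- For every even integer E ≥ 2, |π - π_E| < π/E, where π_E is the truncated Wallis product. -/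
lemma prodIcc_eq_W (n : ℕ) :
    (∏ k ∈ Finset.Icc 1 n, (2 * (k : ℝ)) ^ 2 / ((2 * k - 1) * (2 * k + 1)))
      = Real.Wallis.W n := by
  induction n with
  | zero => simp [Real.Wallis.W]
  | succ n ih =>
    rw [Finset.prod_Icc_succ_top (by omega), ih, Real.Wallis.W_succ]
    congr 1
    push_cast
    have hn0 : (0:ℝ) ≤ n := Nat.cast_nonneg n
    have h1 : (2 * ((n : ℝ) + 1) - 1) ≠ 0 := by intro h; nlinarith
    have h2 : (2 * ((n : ℝ) + 1) + 1) ≠ 0 := by positivity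
    have h3 : (2 * (n : ℝ) + 1) ≠ 0 := by positivity
    have h4 : (2 * (n : ℝ) + 3) ≠ 0 := by positivity
    field_simp
    ring

theorem wallis_trunc_error (E : ℕ) (hE : Even E) (hE2 : 2 ≤ E) :
    |Real.pi - wallisTrunc E| < Real.pi / E := by
  obtain ⟨n, hn⟩ : ∃ n, E = 2 * n + 2 := by
    obtain ⟨m, hm⟩ := hE; exact ⟨m - 1, by omega⟩
  subst hn
  have hdiv : (2 * n + 2) / 2 - 1 = n := by omega
  have hEcast : ((2 * n + 2 : ℕ) : ℝ) = 2 * n + 2 := by push_cast; ring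
  have hW : wallisTrunc (2 * n + 2)
      = 2 * Real.Wallis.W n * ((2 * n + 2) / (2 * n + 1)) := by
    rw [wallisTrunc, hdiv, prodIcc_eq_W, hEcast]
    congr 2
    ring
  have hWpos := Real.Wallis.W_pos n
  have h3 : (0:ℝ) < 2 * n + 1 := by positivity
  have h4 : (0:ℝ) < 2 * n + 2 := by positivity
  have h5 : (0:ℝ) < 2 * n + 3 := by positivity
  -- lower bound: π ≤ wallisTrunc
  have hlow : Real.pi ≤ wallisTrunc (2 * n + 2) := by
    have hle := Real.Wallis.le_W n
    rw [div_mul_eq_mul_div, div_le_iff₀ h4] at hle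
    rw [hW, ← mul_div_assoc, le_div_iff₀ h3]
    nlinarith
  -- rewrite via W (n+1)
  have hW1 : wallisTrunc (2 * n + 2)
      = 2 * Real.Wallis.W (n + 1) * ((2 * n + 3) / (2 * n + 2)) := by
    rw [hW, Real.Wallis.W_succ]
    field_simp
  -- strict upper bound on W (n+1)
  have hWlt : Real.Wallis.W (n + 1) < Real.pi / 2 := by
    have hle := Real.Wallis.W_le (n + 2)
    have hsucc := Real.Wallis.W_succ (n + 1)
    have hWpos1 := Real.Wallis.W_pos (n + 1)
    have hfac : (1:ℝ) < (2 * (n+1) + 2) / (2 * (n+1) + 1) * ((2 * (n+1) + 2) / (2 * (n+1) + 3)) := by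
      rw [div_mul_div_comm, lt_div_iff₀ (by positivity)]
      push_cast; nlinarith
    calc Real.Wallis.W (n + 1)
        < Real.Wallis.W (n + 2) := by
          rw [show n + 2 = n + 1 + 1 from rfl, hsucc]
          push_cast
          nlinarith [mul_pos hWpos1 (sub_pos.mpr hfac)]
      _ ≤ Real.pi / 2 := hle
  have hup : wallisTrunc (2 * n + 2) < Real.pi * (2 * n + 3) / (2 * n + 2) := by
    rw [hW1, mul_div_assoc]
    have h6 : (0:ℝ) < (2 * n + 3) / (2 * n + 2) := by positivity
    nlinarith
  have hcast : ((2 * n + 2 : ℕ) : ℝ) = 2 * n + 2 := hEcast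
  rw [abs_sub_lt_iff]
  constructor
  · have hpi := Real.pi_pos
    rw [hcast]
    rw [div_eq_mul_inv]
    nlinarith [mul_pos Real.pi_pos (inv_pos.mpr h4)]
  · rw [lt_div_iff₀ h4] at hup
    rw [hcast, lt_div_iff₀ h4]
    nlinarith
end

section
/- Catalan's infinite product formula: √2 = ∏_{k=0}^{∞} ((4k+2)(4k+2))/((4k+1)(4k+3)). -/
open Real Filter Finset Topology

private lemma catalanGammaSeqEq (n : ℕ) (hn : 1 ≤ n) :
    Real.GammaSeq (1/4) n * Real.GammaSeq (3/4) n / Real.GammaSeq (1/2) n ^ 2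
      = ∏ k ∈ Finset.range (n+1), (4 * (k : ℝ) + 2) ^ 2 / ((4 * k + 1) * (4 * k + 3)) := by
  have hn0 : (0:ℝ) < n := by exact_mod_cast hn
  have hA : 0 < ∏ j ∈ range (n+1), ((1:ℝ)/4 + (j:ℕ)) := prod_pos (fun j _ => by positivity)
  have hB : 0 < ∏ j ∈ range (n+1), ((3:ℝ)/4 + (j:ℕ)) := prod_pos (fun j _ => by positivity)
  have hC : 0 < ∏ j ∈ range (n+1), ((1:ℝ)/2 + (j:ℕ)) := prod_pos (fun j _ => by positivity)
  have hF : (0:ℝ) < (n.factorial : ℝ) := by exact_mod_cast Nat.factorial_pos n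
  have hterm : ∏ k ∈ range (n+1), (4*(k:ℝ)+2)^2/((4*k+1)*(4*k+3))
      = (∏ j ∈ range (n+1), ((1:ℝ)/2 + (j:ℕ)))^2 /
        ((∏ j ∈ range (n+1), ((1:ℝ)/4 + (j:ℕ))) * (∏ j ∈ range (n+1), ((3:ℝ)/4 + (j:ℕ)))) := by
    rw [← prod_mul_distrib, ← prod_pow, ← prod_div_distrib]
    refine prod_congr rfl fun k _ => ?_
    have h1 : (0:ℝ) < 4*k+1 := by positivity
    have h3 : (0:ℝ) < 4*k+3 := by positivity
    have h4 : (0:ℝ) < 1/4+k := by positivity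
    have h5 : (0:ℝ) < 3/4+k := by positivity
    field_simp
    ring
  rw [hterm]
  simp only [Real.GammaSeq]
  set A := ∏ j ∈ range (n+1), ((1:ℝ)/4 + (j:ℕ)) with hAd
  set B := ∏ j ∈ range (n+1), ((3:ℝ)/4 + (j:ℕ)) with hBd
  set C := ∏ j ∈ range (n+1), ((1:ℝ)/2 + (j:ℕ)) with hCd
  have hp1 : (0:ℝ) < (n:ℝ) ^ ((1:ℝ)/4) := Real.rpow_pos_of_pos hn0 _
  have hp3 : (0:ℝ) < (n:ℝ) ^ ((3:ℝ)/4) := Real.rpow_pos_of_pos hn0 _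
  have hp2 : (0:ℝ) < (n:ℝ) ^ ((1:ℝ)/2) := Real.rpow_pos_of_pos hn0 _
  have hpow : (n:ℝ)^((1:ℝ)/4) * (n:ℝ)^((3:ℝ)/4) = ((n:ℝ)^((1:ℝ)/2))^2 := by
    rw [sq, ← Real.rpow_add hn0, ← Real.rpow_add hn0]
    norm_num
  field_simp
  linear_combination hpow

/-- Catalan's infinite product formula:
`√2 = ∏_{k=0}^{∞} (4k+2)²/((4k+1)(4k+3))`. -/
theorem catalan_product_sqrt_two :
    Filter.Tendsto
      (fun n : ℕ => ∏ k ∈ Finset.range n,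
        (4 * (k : ℝ) + 2) ^ 2 / ((4 * k + 1) * (4 * k + 3)))
      Filter.atTop (nhds (Real.sqrt 2)) := by
  have hsin : Real.sin (π * (1/4)) = Real.sqrt 2 / 2 := by
    rw [show π * (1/4) = π/4 by ring, Real.sin_pi_div_four]
  have h2 : Real.sqrt 2 * Real.sqrt 2 = 2 := Real.mul_self_sqrt (by norm_num)
  have hrefl : Real.Gamma (1/4) * Real.Gamma (3/4) = π * Real.sqrt 2 := by
    have h := Real.Gamma_mul_Gamma_one_sub (1/4)
    norm_num [hsin] at h
    rw [h, div_eq_iff (by positivity : Real.sqrt 2 / 2 ≠ 0)]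
    linear_combination (-π/2) * h2
  have hG2 : Real.Gamma (1/2) ^ 2 = π := by
    rw [Real.Gamma_one_half_eq, sq_sqrt pi_pos.le]
  have hlim : Real.Gamma (1/4) * Real.Gamma (3/4) / Real.Gamma (1/2) ^ 2 = Real.sqrt 2 := by
    rw [hG2, hrefl, mul_comm, mul_div_assoc, div_self pi_ne_zero, mul_one]
  have key : Tendsto
      (fun n : ℕ => Real.GammaSeq (1/4) n * Real.GammaSeq (3/4) n / Real.GammaSeq (1/2) n ^ 2)
      atTop (𝓝 (Real.sqrt 2)) := by
    rw [← hlim]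
    exact ((Real.GammaSeq_tendsto_Gamma (1/4)).mul
      (Real.GammaSeq_tendsto_Gamma (3/4))).div ((Real.GammaSeq_tendsto_Gamma (1/2)).pow 2)
      (by rw [hG2]; exact pi_ne_zero)
  rw [← Filter.tendsto_add_atTop_iff_nat 1]
  refine key.congr' ?_
  filter_upwards [eventually_ge_atTop 1] with n hn
  exact catalanGammaSeqEq n hn
end

section
/- If p/q is the truncated Wallis product π_E in lowest terms (E even, E ≥ 12) and n is a positive integer with E > 10^n, then 10^n·p/q is not an integer. -/
/-- Numerator `N_E = 2·E·(E-2)²···4²·2²` of the truncated Wallis product. -/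
def wallisNum (E : ℕ) : ℕ := 2 * E * ∏ k ∈ Finset.Icc 1 (E / 2 - 1), (2 * k) ^ 2

/-- Denominator `D_E = (E-1)²(E-3)²···3²·1²` of the truncated Wallis product. -/
def wallisDen (E : ℕ) : ℕ := ∏ k ∈ Finset.Icc 1 (E / 2), (2 * k - 1) ^ 2

theorem wallis_trunc_times_ten_pow_not_int (E n p q : ℕ) (hE : Even E) (hE12 : 12 ≤ E)
    (hn : 1 ≤ n) (hEn : 10 ^ n < E) (hq : 0 < q) (hcop : Nat.Coprime p q)
    (hpq : (p : ℝ) / q = (wallisNum E : ℝ) / wallisDen E) :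
    ¬ ∃ m : ℤ, (10 ^ n * p : ℝ) / q = m := by
  rintro ⟨m, hm⟩
  have hEmod : E % 2 = 0 := Nat.even_iff.mp hE
  -- Bertrand's postulate
  obtain ⟨r, hrp, hr1, hr2⟩ := Nat.exists_prime_lt_and_le_two_mul (E / 2) (by omega)
  have hr7 : 7 ≤ r := by omega
  have hrodd : r % 2 = 1 := Nat.odd_iff.mp (hrp.odd_of_ne_two (by omega))
  have hrE : r < E := by
    rcases Nat.lt_or_ge r E with h | h
    · exact h
    · exfalso
      have hrE' : r = E := by omega
      have : Even r := hrE' ▸ hE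
      rw [Nat.even_iff] at this; omega
  -- r divides wallisDen E
  have hrD : r ∣ wallisDen E := by
    have hmem : (r + 1) / 2 ∈ Finset.Icc 1 (E / 2) := by
      simp only [Finset.mem_Icc]; omega
    have heq : 2 * ((r + 1) / 2) - 1 = r := by omega
    calc r ∣ (2 * ((r + 1) / 2) - 1) ^ 2 := by rw [heq]; exact dvd_pow_self r (by norm_num)
      _ ∣ wallisDen E := Finset.dvd_prod_of_mem _ hmem
  -- r does not divide wallisNum E
  have hrN : ¬ r ∣ wallisNum E := by
    intro h
    rw [wallisNum] at h
    rcases (Nat.Prime.dvd_mul hrp).mp h with h | h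
    · rcases (Nat.Prime.dvd_mul hrp).mp h with h | h
      · have := Nat.le_of_dvd (by norm_num) h; omega
      · obtain ⟨c, hc⟩ := h
        have hc2 : 2 ≤ c := by
          rcases c with _ | _ | c
          · omega
          · omega
          · omega
        have : 2 * r ≤ r * c := by
          calc 2 * r = r * 2 := by ring
            _ ≤ r * c := Nat.mul_le_mul_left r hc2
        omega
    · obtain ⟨k, hk, hdvd⟩ := hrp.prime.exists_mem_finset_dvd h
      simp only [Finset.mem_Icc] at hk
      have h2k : r ∣ 2 * k := hrp.dvd_of_dvd_pow hdvd
      rcases (Nat.Prime.dvd_mul hrp).mp h2k with h' | h'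
      · have := Nat.le_of_dvd (by norm_num) h'; omega
      · have := Nat.le_of_dvd (by omega) h'; omega
  -- cross multiplication
  have hDpos : 0 < wallisDen E := by
    apply Finset.prod_pos
    intro k hk
    simp only [Finset.mem_Icc] at hk
    have : 1 ≤ 2 * k - 1 := by omega
    exact pow_pos (by omega) 2
  have hkey : p * wallisDen E = q * wallisNum E := by
    rw [mul_comm q]
    have hq0 : (q : ℝ) ≠ 0 := Nat.cast_ne_zero.mpr (by omega)
    have hD0 : (wallisDen E : ℝ) ≠ 0 := Nat.cast_ne_zero.mpr (by omega)
    field_simp at hpq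
    exact_mod_cast hpq.trans (mul_comm _ _)
  -- r divides q
  have hrq : r ∣ q := by
    have h1 : r ∣ q * wallisNum E := hkey ▸ Dvd.dvd.mul_left hrD p
    rcases (Nat.Prime.dvd_mul hrp).mp h1 with h | h
    · exact h
    · exact absurd h hrN
  -- q divides 10^n
  have hq10 : q ∣ 10 ^ n := by
    have hm' : ((10 ^ n * p : ℕ) : ℝ) = (m : ℝ) * q := by
      push_cast
      rw [div_eq_iff (Nat.cast_ne_zero.mpr (by omega) : (q:ℝ) ≠ 0)] at hm
      push_cast at hm
      linarith [hm]
    have hmz : ((10 ^ n * p : ℕ) : ℤ) = m * q := by exact_mod_cast hm'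
    have : (q : ℤ) ∣ ((10 ^ n * p : ℕ) : ℤ) := ⟨m, by linarith [hmz]⟩
    have hqd : q ∣ 10 ^ n * p := Int.ofNat_dvd.mp this
    exact (Nat.Coprime.dvd_of_dvd_mul_right hcop.symm hqd)
  -- contradiction
  have hr10n : r ∣ 10 ^ n := hrq.trans hq10
  have hr10 : r ∣ 10 := hrp.dvd_of_dvd_pow hr10n
  have hrle : r ≤ 10 := Nat.le_of_dvd (by norm_num) hr10
  interval_cases r <;> revert hrodd hr10 <;> decide
end

section
/- If p/q is the truncated Catalan product √2_E in lowest terms (E ≡ 2 mod 4, E ≥ 14) and n is a positive integer, then 10^n·p/q is not an integer. -/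
/-- Numerator `N_E = 2²·6²···(E-4)²·E` of the truncated Catalan product. -/
def catalanNum (E : ℕ) : ℕ := (∏ k ∈ Finset.range ((E - 2) / 4), (4 * k + 2) ^ 2) * E

/-- Denominator `D_E = (1·3)(5·7)···((E-5)(E-3))·(E-1)` of the truncated Catalan product. -/
def catalanDen (E : ℕ) : ℕ :=
  (∏ k ∈ Finset.range ((E - 2) / 4), (4 * k + 1) * (4 * k + 3)) * (E - 1)

theorem catalan_trunc_times_ten_pow_not_int (E n p q : ℕ) (hE : E % 4 = 2) (hE14 : 14 ≤ E)
    (hn : 1 ≤ n) (hq : 0 < q) (hcop : Nat.Coprime p q)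
    (hpq : (p : ℝ) / q = (catalanNum E : ℝ) / catalanDen E) :
    ¬ ∃ m : ℤ, (10 ^ n * p : ℝ) / q = m := by
  -- write E = 4*m+2
  obtain ⟨m, hm⟩ : ∃ m, E = 4 * m + 2 := ⟨E / 4, by omega⟩
  have hm3 : 3 ≤ m := by omega
  have hrange : (E - 2) / 4 = m := by omega
  -- Bertrand's postulate for 2m+1
  obtain ⟨r, hrp, hr1, hr2⟩ := Nat.exists_prime_lt_and_le_two_mul (2 * m + 1) (by omega)
  have hrne : r ≠ 4 * m + 2 := by
    rintro rfl
    rcases hrp.eq_one_or_self_of_dvd 2 ⟨2 * m + 1, by ring⟩ with h | h <;> omega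
  have hrle : r ≤ 4 * m + 1 := by omega
  have hrodd : r % 2 = 1 := by
    rcases hrp.eq_two_or_odd with h | h
    · omega
    · exact h
  -- r divides the denominator
  have hDpos : 0 < catalanDen E := by
    apply Nat.mul_pos
    · exact Finset.prod_pos fun k _ => by positivity
    · omega
  have hrD : r ∣ catalanDen E := by
    unfold catalanDen
    rw [hrange]
    by_cases hrtop : r = 4 * m + 1
    · exact Dvd.dvd.mul_left ⟨1, by omega⟩ _
    · have h4 : r % 4 = 1 ∨ r % 4 = 3 := by omega
      apply Dvd.dvd.mul_right
      rcases h4 with h | h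
      · have hj : r / 4 < m := by omega
        have heq : 4 * (r / 4) + 1 = r := by omega
        refine dvd_trans ?_ (Finset.dvd_prod_of_mem _ (Finset.mem_range.mpr hj))
        rw [heq]; exact dvd_mul_right _ _
      · have hj : r / 4 < m := by omega
        have heq : 4 * (r / 4) + 3 = r := by omega
        refine dvd_trans ?_ (Finset.dvd_prod_of_mem _ (Finset.mem_range.mpr hj))
        rw [heq]; exact dvd_mul_left _ _
  -- r does not divide the numerator
  have hrN : ¬ r ∣ catalanNum E := by
    unfold catalanNum
    rw [hrange]
    intro h
    rcases hrp.dvd_mul.mp h with h | h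
    · rw [Prime.dvd_finset_prod_iff hrp.prime] at h
      obtain ⟨k, hk, hdvd⟩ := h
      have hk' : k < m := Finset.mem_range.mp hk
      have : r ∣ 4 * k + 2 := hrp.dvd_of_dvd_pow hdvd
      have : r ∣ 2 * (2 * k + 1) := by rw [show 2 * (2 * k + 1) = 4 * k + 2 by ring]; exact this
      rcases hrp.dvd_mul.mp this with h2 | h2
      · have := Nat.le_of_dvd (by norm_num) h2; omega
      · have := Nat.le_of_dvd (by omega) h2; omega
    · have : r ∣ 2 * (2 * m + 1) := by rw [show 2 * (2 * m + 1) = E by omega]; exact h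
      rcases hrp.dvd_mul.mp this with h2 | h2
      · have := Nat.le_of_dvd (by norm_num) h2; omega
      · have := Nat.le_of_dvd (by omega) h2; omega
  -- cross-multiplied equation in ℕ
  have hqR : (q : ℝ) ≠ 0 := Nat.cast_ne_zero.mpr (by omega)
  have hDR : (catalanDen E : ℝ) ≠ 0 := Nat.cast_ne_zero.mpr (by omega)
  have hcross : p * catalanDen E = catalanNum E * q := by
    field_simp at hpq
    rw [mul_comm (catalanNum E) q]
    exact_mod_cast hpq
  -- r divides q
  have hrq : r ∣ q := by
    have : r ∣ catalanNum E * q := hcross ▸ Dvd.dvd.mul_left hrD p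
    rcases hrp.dvd_mul.mp this with h | h
    · exact absurd h hrN
    · exact h
  -- conclude
  rintro ⟨M, hM⟩
  have hMnn : 0 ≤ M := by
    have : (0 : ℝ) ≤ (M : ℝ) := by
      rw [← hM]
      positivity
    exact_mod_cast this
  have hMq : (10 ^ n * p : ℝ) = M * q := by
    field_simp at hM
    linarith [hM]
  have hNat : 10 ^ n * p = M.toNat * q := by
    have h1 : ((10 ^ n * p : ℕ) : ℝ) = ((M.toNat * q : ℕ) : ℝ) := by
      push_cast
      rw [show ((M.toNat : ℝ)) = (M : ℝ) by exact_mod_cast Int.toNat_of_nonneg hMnn]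
      exact hMq
    exact_mod_cast h1
  have hr10p : r ∣ 10 ^ n * p := hNat ▸ Dvd.dvd.mul_left hrq _
  rcases hrp.dvd_mul.mp hr10p with h | h
  · have h10 : r ∣ 10 := hrp.dvd_of_dvd_pow h
    have := Nat.le_of_dvd (by norm_num) h10
    interval_cases r <;> omega
  · have : r ∣ Nat.gcd p q := Nat.dvd_gcd h hrq
    rw [hcop] at this
    have := Nat.le_of_dvd (by norm_num) this
    omega
end
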